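/- In the stopping-cube setting, for every a ∈ ℤ and every x ∈ ℝ^N, Σ_{S ∈ 𝒮^a : x ∈ S} w(S∩Q)/|S| ≤ 2·M(w·1_Q)(x), where M denotes the Hardy–Littlewood maximal operator Mf(x) := sup{ ⨍_R |f| dy : R an axis-parallel cube with x ∈ R }. -/

import Mathlib

open MeasureTheory
open scoped ENNReal

noncomputable section

/-- Points of `ℝ^N` with the `ℓ^∞` (sup) metric, as `Fin N → ℝ`. -/
abbrev Euc (N : ℕ) := Fin N → ℝ

/-- The axis-parallel half-open cube with lower-left corner `c` and sidelength `l`. -/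
def cube {N : ℕ} (c : Euc N) (l : ℝ) : Set (Euc N) :=
  {x | ∀ i, c i ≤ x i ∧ x i < c i + l}

/-- Binary sequences `β = (β_j)_{j ∈ ℤ}` with `β_j ∈ {0,1}^N`, parametrising the
translated dyadic systems. -/
abbrev BSeq (N : ℕ) := ℤ → Fin N → Bool

/-- The translation `Σ_{j > k} 2^{-j} β_j` applied to dyadic cubes of sidelength `2^{-k}`. -/
def betaShift {N : ℕ} (β : BSeq N) (k : ℤ) : Euc N :=
  fun i => ∑' j : {j : ℤ // k < j}, (2 : ℝ) ^ (-(j : ℤ)) * (if β j i then 1 else 0)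

/-- The cube `I ∔ β` of the translated dyadic system `𝒟^β`, where `I ∈ 𝒟⁰` has
sidelength `2^{-k}` and lower-left corner `2^{-k}·p`, `p ∈ ℤ^N`. -/
def dyCube {N : ℕ} (β : BSeq N) (k : ℤ) (p : Fin N → ℤ) : Set (Euc N) :=
  cube (fun i => (p i : ℝ) * (2 : ℝ) ^ (-k) + betaShift β k i) ((2 : ℝ) ^ (-k))

/-- The data of a dyadic shift: for each dyadic cube (indexed by scale `k` and
position `p`) a kernel `a_K : ℝ^N × ℝ^N → ℝ`. -/
abbrev ShiftKernel (N : ℕ) := ℤ → (Fin N → ℤ) → Euc N → Euc N → ℝ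

/-- `a` is (the kernel family of) a dyadic shift with parameters `(u,v)` and constant `A`
on the dyadic system `𝒟^β`: each `a_K` is measurable, supported on `K × K`, bounded by `A`,
constant in `x` on dyadic cubes of sidelength `2^{-v-1}ℓ(K)` and constant in `y` on dyadic
cubes of sidelength `2^{-u-1}ℓ(K)`. -/
structure IsShift {N : ℕ} (β : BSeq N) (u v : ℕ) (A : ℝ) (a : ShiftKernel N) : Prop where
  meas : ∀ k p, Measurable (fun xy : Euc N × Euc N => a k p xy.1 xy.2)
  suppK : ∀ k p x y, a k p x y ≠ 0 → x ∈ dyCube β k p ∧ y ∈ dyCube β k p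
  bdd : ∀ k p x y, |a k p x y| ≤ A
  constX : ∀ k p p' x x' y, x ∈ dyCube β (k + v + 1) p' → x' ∈ dyCube β (k + v + 1) p' →
    a k p x y = a k p x' y
  constY : ∀ k p p' x y y', y ∈ dyCube β (k + u + 1) p' → y' ∈ dyCube β (k + u + 1) p' →
    a k p x y = a k p x y'

/-- The shift is finite: only finitely many of the kernels `a_K` are nonzero. -/
def ShiftFinite {N : ℕ} (a : ShiftKernel N) : Prop :=
  {kp : ℤ × (Fin N → ℤ) | ∃ x y, a kp.1 kp.2 x y ≠ 0}.Finite

/-- The dyadic shift operator `𝕊f(x) = Σ_K |K|⁻¹ ∫_K a_K(x,y) f(y) dy`. -/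
def shiftOp {N : ℕ} (β : BSeq N) (a : ShiftKernel N) (f : Euc N → ℝ) (x : Euc N) : ℝ :=
  ∑' kp : ℤ × (Fin N → ℤ),
    (((2 : ℝ) ^ (-kp.1)) ^ N)⁻¹ * ∫ y in dyCube β kp.1 kp.2, a kp.1 kp.2 x y * f y

/-- The shift restricted to a subcollection `𝒞` of dyadic cubes:
`𝕊_𝒞 f(x) = Σ_{K ∈ 𝒞} |K|⁻¹ ∫_K a_K(x,y) f(y) dy`. -/
def shiftOpOn {N : ℕ} (β : BSeq N) (C : Set (ℤ × (Fin N → ℤ))) (a : ShiftKernel N)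
    (f : Euc N → ℝ) (x : Euc N) : ℝ :=
  ∑' kp : C,
    (((2 : ℝ) ^ (-(kp : ℤ × (Fin N → ℤ)).1)) ^ N)⁻¹ *
      ∫ y in dyCube β (kp : ℤ × (Fin N → ℤ)).1 (kp : ℤ × (Fin N → ℤ)).2,
        a (kp : ℤ × (Fin N → ℤ)).1 (kp : ℤ × (Fin N → ℤ)).2 x y * f y

/-- The shift is good with goodness parameter `γ`: nonvanishing of `a_K(x,y)` forces
`dist(x, ∂K) ≥ 2^{-1-vγ} ℓ(K)` and `dist(y, ∂K) ≥ 2^{-1-uγ} ℓ(K)` (`ℓ^∞` distances). -/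
def IsGoodShift {N : ℕ} (β : BSeq N) (γ : ℝ) (u v : ℕ) (a : ShiftKernel N) : Prop :=
  ∀ k p x y, a k p x y ≠ 0 →
    (2 : ℝ) ^ (-1 - (v : ℝ) * γ) * (2 : ℝ) ^ (-k) ≤
        Metric.infDist x (frontier (dyCube β k p)) ∧
      (2 : ℝ) ^ (-1 - (u : ℝ) * γ) * (2 : ℝ) ^ (-k) ≤
        Metric.infDist y (frontier (dyCube β k p))

/-- The shift is bounded on (unweighted) `L²` with norm at most `A`. -/
def ShiftL2Bounded {N : ℕ} (β : BSeq N) (A : ℝ) (a : ShiftKernel N) : Prop :=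
  ∀ h : Euc N → ℝ, MemLp h 2 volume →
    ∫⁻ x, ENNReal.ofReal ((shiftOp β a h x) ^ 2) ≤
      ENNReal.ofReal (A ^ 2) * ∫⁻ x, ENNReal.ofReal ((h x) ^ 2)

/-- The set of all local `A₂` products `(⨍_Q w)(⨍_Q w⁻¹)` over axis-parallel cubes `Q`. -/
def A2set {N : ℕ} (w : Euc N → ℝ) : Set ℝ :=
  {t | ∃ (c : Euc N) (l : ℝ), 0 < l ∧
    t = (⨍ x in cube c l, w x) * (⨍ x in cube c l, (w x)⁻¹)}

/-- The `A₂` characteristic `[w]_{A₂} = sup_Q (⨍_Q w)(⨍_Q w⁻¹)`. -/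
def A2const {N : ℕ} (w : Euc N → ℝ) : ℝ := sSup (A2set w)

/-- `w` is an `A₂` weight: positive, with `w` and `w⁻¹` locally integrable, and with
finite `A₂` characteristic (the set of local `A₂` products is bounded above). -/
structure IsA2Weight {N : ℕ} (w : Euc N → ℝ) : Prop where
  meas : Measurable w
  pos : ∀ x, 0 < w x
  locInt : LocallyIntegrable w volume
  locIntInv : LocallyIntegrable (fun x => (w x)⁻¹) volume
  bddA2 : BddAbove (A2set w)

/-- The inner part `K̂` of a dyadic cube: points at `ℓ^∞`-distance at least
`2^{-max(u,v)γ} ℓ(K)` from `∂K`. -/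
def hatCube {N : ℕ} (β : BSeq N) (u v : ℕ) (γ : ℝ) (k : ℤ) (p : Fin N → ℤ) :
    Set (Euc N) :=
  {x ∈ dyCube β k p |
    (2:ℝ) ^ (-(max u v : ℝ) * γ) * (2:ℝ) ^ (-k) ≤
      Metric.infDist x (frontier (dyCube β k p))}

/-- The collection `𝒦`: dyadic cubes `K` with `K̂ ∩ Q ≠ ∅` and `ℓ(K) < ℓ(Q)`, whose
sidelengths lie in the residue class `ρ` of `log₂ ℓ(K) mod (v+1)`. Here `Q` is the cube
with corner `Qc` and sidelength `Ql`. -/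
def calK {N : ℕ} (β : BSeq N) (u v : ℕ) (γ : ℝ) (Qc : Euc N) (Ql : ℝ) (ρ : ℤ) :
    Set (ℤ × (Fin N → ℤ)) :=
  {kp | (hatCube β u v γ kp.1 kp.2 ∩ cube Qc Ql).Nonempty ∧ (2:ℝ) ^ (-kp.1) < Ql ∧
    ((v : ℤ) + 1) ∣ (kp.1 - ρ)}

/-- The ratio `w(K ∩ Q)/|K|` for the dyadic cube `K` indexed by `kp`. -/
def wRatio {N : ℕ} (β : BSeq N) (w : Euc N → ℝ) (Qc : Euc N) (Ql : ℝ)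
    (kp : ℤ × (Fin N → ℤ)) : ℝ :=
  (∫ x in dyCube β kp.1 kp.2 ∩ cube Qc Ql, w x) / ((2:ℝ) ^ (-kp.1)) ^ N

/-- The ratio `σ(K)/|K|`, `σ := w⁻¹`, for the dyadic cube `K` indexed by `kp`. -/
def sigRatio {N : ℕ} (β : BSeq N) (w : Euc N → ℝ) (kp : ℤ × (Fin N → ℤ)) : ℝ :=
  (∫ x in dyCube β kp.1 kp.2, (w x)⁻¹) / ((2:ℝ) ^ (-kp.1)) ^ N

/-- The collection `𝒦^a`: cubes of `𝒦` with local `A₂` product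
`(w(K∩Q)/|K|)(σ(K)/|K|)` in `(2^a, 2^{a+1}]`. -/
def calKa {N : ℕ} (β : BSeq N) (u v : ℕ) (γ : ℝ) (w : Euc N → ℝ) (Qc : Euc N) (Ql : ℝ)
    (ρ : ℤ) (a : ℤ) : Set (ℤ × (Fin N → ℤ)) :=
  {kp ∈ calK β u v γ Qc Ql ρ |
    (2:ℝ) ^ a < wRatio β w Qc Ql kp * sigRatio β w kp ∧
      wRatio β w Qc Ql kp * sigRatio β w kp ≤ (2:ℝ) ^ (a + 1)}

/-- The generations `𝒮^a_n` of stopping cubes: `𝒮^a_0` are the maximal cubes of `𝒦^a`,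
and `𝒮^a_{n+1}` the maximal `K ∈ 𝒦^a` with `w(K∩Q)/|K| > 4·w(S∩Q)/|S|` for some
`S ∈ 𝒮^a_n` strictly containing `K`. -/
def stopFam {N : ℕ} (β : BSeq N) (u v : ℕ) (γ : ℝ) (w : Euc N → ℝ) (Qc : Euc N)
    (Ql : ℝ) (ρ : ℤ) (a : ℤ) : ℕ → Set (ℤ × (Fin N → ℤ))
  | 0 =>
    {kp ∈ calKa β u v γ w Qc Ql ρ a |
      ∀ kp' ∈ calKa β u v γ w Qc Ql ρ a,
        dyCube β kp.1 kp.2 ⊆ dyCube β kp'.1 kp'.2 →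
          dyCube β kp'.1 kp'.2 = dyCube β kp.1 kp.2}
  | (n + 1) =>
    {kp | (kp ∈ calKa β u v γ w Qc Ql ρ a ∧
        ∃ s ∈ stopFam β u v γ w Qc Ql ρ a n,
          dyCube β kp.1 kp.2 ⊂ dyCube β s.1 s.2 ∧
            4 * wRatio β w Qc Ql s < wRatio β w Qc Ql kp) ∧
      ∀ kp', (kp' ∈ calKa β u v γ w Qc Ql ρ a ∧
          ∃ s ∈ stopFam β u v γ w Qc Ql ρ a n,
            dyCube β kp'.1 kp'.2 ⊂ dyCube β s.1 s.2 ∧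
              4 * wRatio β w Qc Ql s < wRatio β w Qc Ql kp') →
        dyCube β kp.1 kp.2 ⊆ dyCube β kp'.1 kp'.2 →
          dyCube β kp'.1 kp'.2 = dyCube β kp.1 kp.2}

/-- The full stopping family `𝒮^a = ⋃_n 𝒮^a_n`. -/
def stopSet {N : ℕ} (β : BSeq N) (u v : ℕ) (γ : ℝ) (w : Euc N → ℝ) (Qc : Euc N)
    (Ql : ℝ) (ρ : ℤ) (a : ℤ) : Set (ℤ × (Fin N → ℤ)) :=
  ⋃ n : ℕ, stopFam β u v γ w Qc Ql ρ a n

/-- The collection `𝒦^a(S)` of cubes of `𝒦^a` whose minimal stopping cube is `S`. -/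
def calKaS {N : ℕ} (β : BSeq N) (u v : ℕ) (γ : ℝ) (w : Euc N → ℝ) (Qc : Euc N)
    (Ql : ℝ) (ρ : ℤ) (a : ℤ) (s : ℤ × (Fin N → ℤ)) : Set (ℤ × (Fin N → ℤ)) :=
  {kp ∈ calKa β u v γ w Qc Ql ρ a |
    dyCube β kp.1 kp.2 ⊆ dyCube β s.1 s.2 ∧
      ∀ s' ∈ stopSet β u v γ w Qc Ql ρ a,
        dyCube β kp.1 kp.2 ⊆ dyCube β s'.1 s'.2 →
          dyCube β s.1 s.2 ⊆ dyCube β s'.1 s'.2}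

/-- The collection `𝒦^a_b(S)` of cubes `K ∈ 𝒦^a(S)` with
`2^{1-b} w(S∩Q)/|S| < w(K∩Q)/|K| ≤ 2^{2-b} w(S∩Q)/|S|`. -/
def calKaSb {N : ℕ} (β : BSeq N) (u v : ℕ) (γ : ℝ) (w : Euc N → ℝ) (Qc : Euc N)
    (Ql : ℝ) (ρ : ℤ) (a : ℤ) (s : ℤ × (Fin N → ℤ)) (b : ℕ) : Set (ℤ × (Fin N → ℤ)) :=
  {kp ∈ calKaS β u v γ w Qc Ql ρ a s |
    (2:ℝ) ^ (1 - (b : ℤ)) * wRatio β w Qc Ql s < wRatio β w Qc Ql kp ∧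
      wRatio β w Qc Ql kp ≤ (2:ℝ) ^ (2 - (b : ℤ)) * wRatio β w Qc Ql s}

/-- The Hardy–Littlewood maximal function over axis-parallel cubes (with values
in `[0,∞]`). -/
def maximalFn {N : ℕ} (f : Euc N → ℝ) (x : Euc N) : ℝ≥0∞ :=
  ⨆ (c : Euc N) (l : ℝ) (_ : 0 < l) (_ : x ∈ cube c l),
    ENNReal.ofReal (⨍ y in cube c l, |f y|)

section Geometry

variable {N : ℕ}

lemma cube_eq_pi (c : Euc N) (l : ℝ) :
    cube c l = Set.pi Set.univ (fun i => Set.Ico (c i) (c i + l)) := by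
  ext x; simp [cube, Set.mem_pi, Set.mem_Ico]

lemma measurableSet_cube (c : Euc N) (l : ℝ) : MeasurableSet (cube c l) := by
  rw [cube_eq_pi]; exact MeasurableSet.univ_pi fun i => measurableSet_Ico

lemma volume_cube (c : Euc N) (l : ℝ) :
    volume (cube c l) = ENNReal.ofReal l ^ N := by
  rw [cube_eq_pi, volume_pi_pi]
  simp [Real.volume_Ico]

lemma cube_inj (hN : 0 < N) {c c' : Euc N} {l l' : ℝ} (hl : 0 < l) (hl' : 0 < l')
    (h : cube c l = cube c' l') : c = c' ∧ l = l' := by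
  have mem : ∀ (c₀ : Euc N) (l₀ : ℝ), 0 < l₀ → c₀ ∈ cube c₀ l₀ :=
    fun c₀ l₀ h₀ i => ⟨le_refl _, by linarith⟩
  have h1 : c ∈ cube c' l' := h ▸ mem c l hl
  have h2 : c' ∈ cube c l := h.symm ▸ mem c' l' hl'
  have hcc : c = c' := funext fun i => le_antisymm ((h2 i).1) ((h1 i).1)
  subst hcc
  refine ⟨rfl, ?_⟩
  by_contra hne
  rcases lt_or_gt_of_ne hne with hlt | hlt
  · have hmem : (fun i => c i + l) ∈ cube c l' := fun i => by
      dsimp only; exact ⟨by linarith, by linarith⟩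
    rw [← h] at hmem
    exact absurd (hmem ⟨0, hN⟩).2 (lt_irrefl _)
  · have hmem : (fun i => c i + l') ∈ cube c l := fun i => by
      dsimp only; exact ⟨by linarith, by linarith⟩
    rw [h] at hmem
    exact absurd (hmem ⟨0, hN⟩).2 (lt_irrefl _)

lemma summable_shiftTerm (β : BSeq N) (i : Fin N) (k : ℤ) :
    Summable (fun n : ℕ => (2:ℝ) ^ (-(k + 1 + (n:ℤ))) * (if β (k + 1 + (n:ℤ)) i then 1 else 0)) := by
  apply Summable.of_nonneg_of_le (fun n => ?_) (fun n => ?_)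
    ((summable_geometric_of_lt_one (by norm_num : (0:ℝ) ≤ 2⁻¹)
      (by norm_num : (2:ℝ)⁻¹ < 1)).mul_left ((2:ℝ) ^ (-(k+1))))
  · positivity
  · have he : (2:ℝ) ^ (-(k + 1 + (n:ℤ))) = (2:ℝ) ^ (-(k+1)) * (2:ℝ)⁻¹ ^ n := by
      rw [show -(k+1+(n:ℤ)) = (-(k+1)) + (-(n:ℤ)) by ring,
        zpow_add₀ (two_ne_zero : (2:ℝ) ≠ 0)]
      congr 1
      rw [zpow_neg, zpow_natCast, inv_pow]
    rw [he]
    exact mul_le_of_le_one_right (by positivity) (by split <;> norm_num)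

lemma betaShift_eq_nat (β : BSeq N) (k : ℤ) (i : Fin N) :
    betaShift β k i
      = ∑' n : ℕ, (2:ℝ) ^ (-(k + 1 + (n:ℤ))) * (if β (k + 1 + (n:ℤ)) i then 1 else 0) := by
  rw [betaShift]
  let e : ℕ ≃ {j : ℤ // k < j} :=
    { toFun := fun n => ⟨k + 1 + n, by omega⟩
      invFun := fun j => (j.1 - (k + 1)).toNat
      left_inv := fun n => by simp
      right_inv := fun j => Subtype.ext (by have := j.2; simp; omega) }
  rw [← e.tsum_eq]
  rfl

lemma betaShift_sub (β : BSeq N) (i : Fin N) {k k' : ℤ} (hk : k ≤ k') :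
    ∃ m : ℤ, betaShift β k i = (m:ℝ) * (2:ℝ) ^ (-k') + betaShift β k' i := by
  set M := (k' - k).toNat with hM
  have hsum := summable_shiftTerm β i k
  have hsplit := (Summable.sum_add_tsum_nat_add M hsum).symm
  have htail : ∑' n : ℕ,
      (2:ℝ) ^ (-(k + 1 + ((n + M : ℕ):ℤ))) * (if β (k + 1 + ((n + M : ℕ):ℤ)) i then 1 else 0)
      = betaShift β k' i := by
    rw [betaShift_eq_nat β k' i]
    apply tsum_congr; intro n
    have h1 : (k + 1 + ((n + M : ℕ):ℤ)) = k' + 1 + (n:ℤ) := by push_cast; omega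
    rw [h1]
  refine ⟨∑ n ∈ Finset.range M, 2 ^ (M - 1 - n) * (if β (k + 1 + (n:ℤ)) i then 1 else 0), ?_⟩
  rw [betaShift_eq_nat β k i, hsplit, htail]
  congr 1
  push_cast
  rw [Finset.sum_mul]
  apply Finset.sum_congr rfl
  intro n hn
  have hn' : n < M := Finset.mem_range.mp hn
  have he : (2:ℝ) ^ (M - 1 - n : ℕ) * (2:ℝ) ^ (-k') = (2:ℝ) ^ (-(k + 1 + (n:ℤ))) := by
    rw [← zpow_natCast (2:ℝ) (M - 1 - n), ← zpow_add₀ (two_ne_zero : (2:ℝ) ≠ 0)]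
    congr 1
    omega
  rw [mul_right_comm, he]

lemma floor_div_eq {t : ℝ} {n D : ℤ} (hD : 0 < D) (ht : ⌊t⌋ = n) :
    ⌊t / (D:ℝ)⌋ = ⌊(n:ℝ) / (D:ℝ)⌋ := by
  have hD' : (0:ℝ) < (D:ℝ) := by exact_mod_cast hD
  have h1 : (n:ℝ) ≤ t := ht ▸ Int.floor_le t
  have h2 : t < (n:ℝ) + 1 := by rw [← ht]; exact Int.lt_floor_add_one t
  set q := ⌊(n:ℝ) / (D:ℝ)⌋ with hq
  have hq1 : (q:ℝ) ≤ (n:ℝ) / (D:ℝ) := Int.floor_le _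
  have hq2 : (n:ℝ) / (D:ℝ) < q + 1 := Int.lt_floor_add_one _
  have hn1 : (n:ℝ) < (D:ℝ) * ((q:ℝ)+1) := by
    rw [div_lt_iff₀ hD'] at hq2; linarith
  have hn2 : n + 1 ≤ D * (q+1) := by
    have : n < D * (q + 1) := by exact_mod_cast hn1
    omega
  rw [Int.floor_eq_iff]
  constructor
  · exact le_trans hq1 (by gcongr)
  · rw [div_lt_iff₀ hD']
    have : ((n:ℝ) + 1) ≤ (D:ℝ) * ((q:ℝ) + 1) := by exact_mod_cast hn2
    push_cast
    nlinarith

lemma mem_dyCube_iff {β : BSeq N} {k : ℤ} {p : Fin N → ℤ} {x : Euc N} :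
    x ∈ dyCube β k p ↔ ∀ i, ⌊(x i - betaShift β k i) * (2:ℝ) ^ k⌋ = p i := by
  unfold dyCube cube
  simp only [Set.mem_setOf_eq]
  refine forall_congr' fun i => ?_
  have hA : (0:ℝ) < (2:ℝ) ^ k := by positivity
  have hinv : (2:ℝ) ^ (-k) = ((2:ℝ) ^ k)⁻¹ := zpow_neg 2 k
  rw [Int.floor_eq_iff, hinv]
  set A := (2:ℝ) ^ k
  set s := betaShift β k i
  constructor
  · rintro ⟨ha, hb⟩
    constructor
    · have h := mul_le_mul_of_nonneg_right
        (show (p i : ℝ) * A⁻¹ ≤ x i - s by linarith) hA.le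
      rwa [mul_assoc, inv_mul_cancel₀ hA.ne', mul_one] at h
    · have hd : ((p i : ℝ) + 1) * A⁻¹ = (p i : ℝ) * A⁻¹ + A⁻¹ := by ring
      have h := mul_lt_mul_of_pos_right
        (show x i - s < ((p i : ℝ) + 1) * A⁻¹ by rw [hd]; linarith) hA
      rwa [mul_assoc, inv_mul_cancel₀ hA.ne', mul_one] at h
  · rintro ⟨ha, hb⟩
    have hAinv : (0:ℝ) < A⁻¹ := by positivity
    have h1 := mul_le_mul_of_nonneg_right ha hAinv.le
    rw [mul_assoc, mul_inv_cancel₀ hA.ne', mul_one] at h1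
    have h2 := mul_lt_mul_of_pos_right hb hAinv
    rw [mul_assoc, mul_inv_cancel₀ hA.ne', mul_one] at h2
    constructor
    · linarith
    · have hd : ((p i : ℝ) + 1) * A⁻¹ = (p i : ℝ) * A⁻¹ + A⁻¹ := by ring
      nlinarith

lemma dyCube_subset (β : BSeq N) {k k' : ℤ} (hk : k ≤ k') {p p' : Fin N → ℤ} {z : Euc N}
    (hz : z ∈ dyCube β k p) (hz' : z ∈ dyCube β k' p') :
    dyCube β k' p' ⊆ dyCube β k p := by
  intro y hy
  rw [mem_dyCube_iff] at hz hz' hy ⊢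
  intro i
  obtain ⟨m, hm⟩ := betaShift_sub β i hk
  set D : ℤ := 2 ^ (k' - k).toNat with hD
  have hDpos : (0:ℤ) < D := pow_pos (by norm_num) _
  have hDr : (D:ℝ) = (2:ℝ) ^ (k' - k) := by
    rw [hD]
    push_cast
    rw [← zpow_natCast (2:ℝ) (k' - k).toNat]
    congr 1
    omega
  have hDne : (D:ℝ) ≠ 0 := by positivity
  have key : ∀ t : ℝ, (t - betaShift β k i) * (2:ℝ) ^ k
      = ((t - betaShift β k' i) * (2:ℝ) ^ k' - (m:ℝ)) / (D:ℝ) := by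
    intro t
    rw [hm, eq_div_iff hDne, hDr, zpow_sub₀ (two_ne_zero : (2:ℝ) ≠ 0), zpow_neg]
    have h1 : ((2:ℝ) ^ k) ≠ 0 := by positivity
    have h2 : ((2:ℝ) ^ k') ≠ 0 := by positivity
    field_simp
    ring
  have fy : ⌊(y i - betaShift β k i) * (2:ℝ) ^ k⌋ = ⌊((p' i - m : ℤ) : ℝ) / (D:ℝ)⌋ := by
    rw [key]
    exact floor_div_eq hDpos (by rw [Int.floor_sub_intCast, hy i])
  have fz : ⌊(z i - betaShift β k i) * (2:ℝ) ^ k⌋ = ⌊((p' i - m : ℤ) : ℝ) / (D:ℝ)⌋ := by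
    rw [key]
    exact floor_div_eq hDpos (by rw [Int.floor_sub_intCast, hz' i])
  rw [fy, ← fz, hz i]

lemma dyCube_dichotomy (β : BSeq N) {k k' : ℤ} {p p' : Fin N → ℤ} {z : Euc N}
    (hz : z ∈ dyCube β k p) (hz' : z ∈ dyCube β k' p') :
    dyCube β k p ⊆ dyCube β k' p' ∨ dyCube β k' p' ⊆ dyCube β k p := by
  rcases le_total k k' with h | h
  · exact Or.inr (dyCube_subset β h hz hz')
  · exact Or.inl (dyCube_subset β h hz' hz)

lemma dyCube_inj (hN : 0 < N) (β : BSeq N) {k k' : ℤ} {p p' : Fin N → ℤ}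
    (h : dyCube β k p = dyCube β k' p') : k = k' ∧ p = p' := by
  obtain ⟨hc, hl⟩ := cube_inj hN (by positivity : (0:ℝ) < (2:ℝ)^(-k))
    (by positivity : (0:ℝ) < (2:ℝ)^(-k')) h
  have hk : k = k' := by
    have := zpow_right_injective₀ (by norm_num : (0:ℝ) < 2) (by norm_num) hl
    omega
  subst hk
  refine ⟨rfl, ?_⟩
  funext i
  have := congrFun hc i
  have h2 : ((p i : ℝ)) * (2:ℝ)^(-k) = ((p' i : ℝ)) * (2:ℝ)^(-k) := by linarith [this]
  have h3 : ((p i : ℝ)) = ((p' i : ℝ)) :=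
    mul_right_cancel₀ (by positivity : ((2:ℝ)^(-k)) ≠ 0) h2
  exact_mod_cast h3

end Geometry

section MeasureStuff

variable {N : ℕ}

lemma wRatio_nonneg (β : BSeq N) (w : Euc N → ℝ) (hw : ∀ z, 0 < w z) (Qc : Euc N) (Ql : ℝ)
    (kp : ℤ × (Fin N → ℤ)) : 0 ≤ wRatio β w Qc Ql kp :=
  div_nonneg (integral_nonneg fun y => (hw y).le) (by positivity)

lemma sigRatio_nonneg (β : BSeq N) (w : Euc N → ℝ) (hw : ∀ z, 0 < w z)
    (kp : ℤ × (Fin N → ℤ)) : 0 ≤ sigRatio β w kp :=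
  div_nonneg (integral_nonneg fun y => inv_nonneg.mpr (hw y).le) (by positivity)

lemma wRatio_pos_of_calKa (β : BSeq N) (u v : ℕ) (γ : ℝ) (w : Euc N → ℝ) (hw : ∀ z, 0 < w z)
    (Qc : Euc N) (Ql : ℝ) (ρ : ℤ) (a : ℤ) {kp : ℤ × (Fin N → ℤ)}
    (h : kp ∈ calKa β u v γ w Qc Ql ρ a) :
    0 < wRatio β w Qc Ql kp := by
  have h1 : (2:ℝ)^a < wRatio β w Qc Ql kp * sigRatio β w kp := h.2.1
  have h2 : (0:ℝ) < (2:ℝ)^a := by positivity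
  have h3 := sigRatio_nonneg β w hw kp
  nlinarith [wRatio_nonneg β w hw Qc Ql kp]

lemma ofReal_wRatio_le_maximalFn (β : BSeq N) (w : Euc N → ℝ) (hw : ∀ z, 0 < w z)
    (Qc : Euc N) (Ql : ℝ) (kp : ℤ × (Fin N → ℤ)) {x : Euc N} (hx : x ∈ dyCube β kp.1 kp.2) :
    ENNReal.ofReal (wRatio β w Qc Ql kp) ≤ maximalFn ((cube Qc Ql).indicator w) x := by
  obtain ⟨k, p⟩ := kp
  set c : Euc N := fun i => (p i : ℝ) * (2:ℝ)^(-k) + betaShift β k i with hc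
  set l : ℝ := (2:ℝ)^(-k) with hl
  have hl0 : 0 < l := by positivity
  have hcube : dyCube β k p = cube c l := rfl
  have havg : ⨍ y in cube c l, |((cube Qc Ql).indicator w) y| = wRatio β w Qc Ql (k, p) := by
    rw [setAverage_eq]
    have h1 : ∫ y in cube c l, |((cube Qc Ql).indicator w) y|
        = ∫ y in cube c l, ((cube Qc Ql).indicator w) y :=
      integral_congr_ae (Filter.Eventually.of_forall fun y =>
        abs_of_nonneg (Set.indicator_nonneg (fun z _ => (hw z).le) y))
    rw [h1, setIntegral_indicator (measurableSet_cube Qc Ql), measureReal_def, volume_cube]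
    have h2 : ((ENNReal.ofReal l) ^ N).toReal = l ^ N := by
      rw [ENNReal.toReal_pow, ENNReal.toReal_ofReal hl0.le]
    rw [h2, smul_eq_mul, inv_mul_eq_div]
    rfl
  have hle : ENNReal.ofReal (wRatio β w Qc Ql (k,p))
      ≤ ENNReal.ofReal (⨍ y in cube c l, |((cube Qc Ql).indicator w) y|) :=
    le_of_eq (by rw [havg])
  refine le_trans hle ?_
  unfold maximalFn
  exact le_iSup_of_le c (le_iSup_of_le l (le_iSup_of_le hl0 (le_iSup_of_le (hcube ▸ hx) le_rfl)))

lemma stopFam_subset_calKa (β : BSeq N) (u v : ℕ) (γ : ℝ) (w : Euc N → ℝ) (Qc : Euc N)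
    (Ql : ℝ) (ρ : ℤ) (a : ℤ) (n : ℕ) (kp : ℤ × (Fin N → ℤ))
    (h : kp ∈ stopFam β u v γ w Qc Ql ρ a n) :
    kp ∈ calKa β u v γ w Qc Ql ρ a := by
  cases n with
  | zero => exact h.1
  | succ n => exact h.1.1

lemma stopFam_maximal (β : BSeq N) (u v : ℕ) (γ : ℝ) (w : Euc N → ℝ) (Qc : Euc N)
    (Ql : ℝ) (ρ : ℤ) (a : ℤ) (n : ℕ) (kp kp' : ℤ × (Fin N → ℤ))
    (h : kp ∈ stopFam β u v γ w Qc Ql ρ a n) (h' : kp' ∈ stopFam β u v γ w Qc Ql ρ a n)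
    (hsub : dyCube β kp.1 kp.2 ⊆ dyCube β kp'.1 kp'.2) :
    dyCube β kp'.1 kp'.2 = dyCube β kp.1 kp.2 := by
  cases n with
  | zero => exact h.2 kp' h'.1 hsub
  | succ n => exact h.2 kp' h'.1 hsub

lemma stopFam_unique (hN : 0 < N) (β : BSeq N) (u v : ℕ) (γ : ℝ) (w : Euc N → ℝ)
    (Qc : Euc N) (Ql : ℝ) (ρ : ℤ) (a : ℤ) (n : ℕ) {kp kp' : ℤ × (Fin N → ℤ)} {x : Euc N}
    (h : kp ∈ stopFam β u v γ w Qc Ql ρ a n) (h' : kp' ∈ stopFam β u v γ w Qc Ql ρ a n)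
    (hx : x ∈ dyCube β kp.1 kp.2) (hx' : x ∈ dyCube β kp'.1 kp'.2) : kp = kp' := by
  rcases dyCube_dichotomy β hx hx' with hs | hs
  · have heq := stopFam_maximal β u v γ w Qc Ql ρ a n kp kp' h h' hs
    obtain ⟨h1, h2⟩ := dyCube_inj hN β heq
    exact Prod.ext h1.symm (h2.symm)
  · have heq := stopFam_maximal β u v γ w Qc Ql ρ a n kp' kp h' h hs
    obtain ⟨h1, h2⟩ := dyCube_inj hN β heq
    exact Prod.ext h1 h2

end MeasureStuff

/-- at every point, the sum of the ratios `w(S∩Q)/|S|` over the stopping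
cubes containing the point is dominated by twice the maximal function of `w·1_Q`. -/
theorem statement_17 (N : ℕ) (β : BSeq N) (u v : ℕ) (γ : ℝ) (hγ0 : 0 < γ)
    (hγ2 : γ < 1/2) (w : Euc N → ℝ) (hw : IsA2Weight w) (Qc : Euc N) (Ql : ℝ)
    (hQl : 0 < Ql) (ρ : ℤ) (a : ℤ) (x : Euc N) :
    ∑' s : {kp // kp ∈ stopSet β u v γ w Qc Ql ρ a ∧ x ∈ dyCube β kp.1 kp.2},
        ENNReal.ofReal (wRatio β w Qc Ql (s : ℤ × (Fin N → ℤ)))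
      ≤ 2 * maximalFn ((cube Qc Ql).indicator w) x := by
  rcases Nat.eq_zero_or_pos N with hN | hN
  · -- degenerate case N = 0 : the collection 𝒦 is empty
    subst hN
    have hempty : ∀ kp : ℤ × (Fin 0 → ℤ), kp ∉ stopSet β u v γ w Qc Ql ρ a := by
      intro kp hkp
      obtain ⟨S, ⟨n, rfl⟩, hn⟩ := hkp
      have hcalKa := stopFam_subset_calKa β u v γ w Qc Ql ρ a n kp hn
      obtain ⟨y, hy, -⟩ := hcalKa.1.1
      have huniv : dyCube β kp.1 kp.2 = Set.univ :=
        Set.eq_univ_iff_forall.mpr (fun z i => i.elim0)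
      have hzero : Metric.infDist y (frontier (dyCube β kp.1 kp.2)) = 0 := by
        rw [huniv, frontier_univ, Metric.infDist_empty]
      have hle := hy.2
      rw [hzero] at hle
      have hpos : (0:ℝ) < (2:ℝ) ^ (-(max u v : ℝ) * γ) * (2:ℝ) ^ (-kp.1) := by positivity
      linarith
    rw [ENNReal.tsum_eq_zero.mpr]
    · exact zero_le
    · rintro ⟨kp, hkp, -⟩
      exact absurd hkp (hempty kp)
  · -- main case
    set Mx := maximalFn ((cube Qc Ql).indicator w) x with hMx
    set P : ℕ → (ℤ × (Fin N → ℤ)) → Prop :=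
      fun n kp => kp ∈ stopFam β u v γ w Qc Ql ρ a n ∧ x ∈ dyCube β kp.1 kp.2 with hP
    set g : ℕ → ℝ≥0∞ :=
      fun n => ⨆ kp, ⨆ _ : P n kp, ENNReal.ofReal (wRatio β w Qc Ql kp) with hg
    have huniq : ∀ n kp kp', P n kp → P n kp' → kp = kp' := fun n kp kp' h h' =>
      stopFam_unique hN β u v γ w Qc Ql ρ a n h.1 h'.1 h.2 h'.2
    have hval : ∀ n kp, P n kp → g n = ENNReal.ofReal (wRatio β w Qc Ql kp) := by
      intro n kp h
      apply le_antisymm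
      · exact iSup_le fun kp' => iSup_le fun h' => le_of_eq (by rw [huniq n kp' kp h' h])
      · exact le_iSup_of_le kp (le_iSup_of_le h le_rfl)
    have hex : ∀ n, g n ≠ 0 → ∃ kp, P n kp := by
      intro n hgn
      by_contra hno
      push_neg at hno
      exact hgn (le_antisymm (iSup_le fun kp => iSup_le fun h => absurd h (hno kp)) zero_le)
    have hgM : ∀ n, g n ≤ Mx := by
      intro n
      exact iSup_le fun kp => iSup_le fun h =>
        ofReal_wRatio_le_maximalFn β w hw.pos Qc Ql kp h.2
    have hstep : ∀ n, g (n+1) ≠ 0 → g n ≠ 0 ∧ 4 * g n ≤ g (n+1) := by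
      intro n hgn
      obtain ⟨kp, hkp⟩ := hex (n+1) hgn
      obtain ⟨⟨hcal, s, hs, hss, hlt⟩, hmax⟩ := hkp.1
      have hxs : x ∈ dyCube β s.1 s.2 := hss.subset hkp.2
      have hPs : P n s := ⟨hs, hxs⟩
      have hsCal := stopFam_subset_calKa β u v γ w Qc Ql ρ a n s hs
      have hwpos : 0 < wRatio β w Qc Ql s :=
        wRatio_pos_of_calKa β u v γ w hw.pos Qc Ql ρ a hsCal
      constructor
      · rw [hval n s hPs]
        simp only [ne_eq, ENNReal.ofReal_eq_zero, not_le]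
        exact hwpos
      · rw [hval n s hPs, hval (n+1) kp hkp]
        calc (4:ℝ≥0∞) * ENNReal.ofReal (wRatio β w Qc Ql s)
            = ENNReal.ofReal (4 * wRatio β w Qc Ql s) := by
              rw [ENNReal.ofReal_mul (by norm_num : (0:ℝ) ≤ 4)]
              norm_num
          _ ≤ ENNReal.ofReal (wRatio β w Qc Ql kp) := ENNReal.ofReal_le_ofReal hlt.le
    have claim : ∀ n, g n ≠ 0 → ∑ i ∈ Finset.range (n+1), g i ≤ 2 * g n := by
      intro n
      induction n with
      | zero =>
        intro _
        rw [Finset.sum_range_one]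
        exact le_mul_of_one_le_left zero_le one_le_two
      | succ n ih =>
        intro h
        obtain ⟨h0, h4⟩ := hstep n h
        have ihh := ih h0
        rw [Finset.sum_range_succ]
        have h2 : 2 * g n ≤ g (n+1) / 2 := by
          rw [ENNReal.le_div_iff_mul_le (Or.inl (two_ne_zero)) (Or.inl (ENNReal.ofNat_ne_top))]
          calc 2 * g n * 2 = 4 * g n := by ring
            _ ≤ g (n+1) := h4
        calc ∑ i ∈ Finset.range (n+1), g i + g (n+1)
            ≤ 2 * g n + g (n+1) := add_le_add ihh le_rfl
          _ ≤ g (n+1) / 2 + g (n+1) := add_le_add h2 le_rfl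
          _ ≤ g (n+1) + g (n+1) := add_le_add (ENNReal.half_le_self) le_rfl
          _ = 2 * g (n+1) := (two_mul _).symm
    have aux : ∀ n, ∑ i ∈ Finset.range n, g i ≤ 2 * Mx := by
      intro n
      induction n with
      | zero => simp
      | succ n ih =>
        by_cases h : g n = 0
        · rw [Finset.sum_range_succ, h, add_zero]; exact ih
        · exact le_trans (claim n h) (mul_le_mul_right (hgM n) 2)
    have final : ∑' n, g n ≤ 2 * Mx := by
      rw [ENNReal.tsum_eq_iSup_sum]
      apply iSup_le
      intro s
      obtain ⟨n, hsub⟩ := s.exists_nat_subset_range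
      exact le_trans (Finset.sum_le_sum_of_subset hsub) (aux n)
    have hmemn : ∀ s : {kp // kp ∈ stopSet β u v γ w Qc Ql ρ a ∧ x ∈ dyCube β kp.1 kp.2},
        ∃ n, s.1 ∈ stopFam β u v γ w Qc Ql ρ a n := fun s => Set.mem_iUnion.mp s.2.1
    set ι : {kp // kp ∈ stopSet β u v γ w Qc Ql ρ a ∧ x ∈ dyCube β kp.1 kp.2} → ℕ :=
      fun s => Classical.choose (hmemn s) with hι'
    have hι : ∀ s, P (ι s) s.1 := fun s => ⟨Classical.choose_spec (hmemn s), s.2.2⟩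
    have hinj : Function.Injective ι := by
      intro s t h
      have hPt : P (ι s) t.1 := h ▸ hι t
      exact Subtype.ext (huniq (ι s) s.1 t.1 (hι s) hPt)
    have hle1 : ∀ s, ENNReal.ofReal (wRatio β w Qc Ql s.1) ≤ g (ι s) := fun s =>
      le_iSup_of_le s.1 (le_iSup_of_le (hι s) le_rfl)
    calc ∑' s : {kp // kp ∈ stopSet β u v γ w Qc Ql ρ a ∧ x ∈ dyCube β kp.1 kp.2},
          ENNReal.ofReal (wRatio β w Qc Ql (s : ℤ × (Fin N → ℤ)))
        ≤ ∑' s : {kp // kp ∈ stopSet β u v γ w Qc Ql ρ a ∧ x ∈ dyCube β kp.1 kp.2}, g (ι s) :=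
          ENNReal.tsum_le_tsum hle1
      _ ≤ ∑' n, g n := ENNReal.tsum_comp_le_tsum_of_injective hinj g
      _ ≤ 2 * Mx := final
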